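/- Let X be a type equipped with a binary adjacency relation adj, and let Ω1, Ω2 be countable types. Suppose M1 : X → PMF Ω1 satisfies (ε1, δ1)-differential privacy and M2 : X → PMF Ω2 satisfies (ε2, δ2)-differential privacy with respect to adj, where ε1, ε2, δ1, δ2 ≥ 0. Then the composed mechanism M : X → PMF (Ω1 × Ω2) defined by M D = (M1 D).bind (fun a => (M2 D).map (fun b => (a, b))) (the independent pair of the two outputs) satisfies (ε1 + ε2, δ1 + δ2)-differential privacy with respect to adj. -/

import Mathlib

open scoped ENNReal

open MeasureTheory in
private lemma dp_layer_pt (c : ℝ≥0∞) (hc : c ≤ 1) :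
    ∫⁻ t in Set.Ioo (0:ℝ) 1, Set.indicator {t : ℝ | ENNReal.ofReal t < c} (fun _ => (1:ℝ≥0∞)) t = c := by
  have hne : c ≠ ⊤ := (lt_of_le_of_lt hc (by norm_num)).ne
  have hmeas : MeasurableSet {t : ℝ | ENNReal.ofReal t < c} := by
    rcases eq_or_ne c 0 with rfl | h0
    · convert MeasurableSet.empty
      ext t; simp
    · have : {t : ℝ | ENNReal.ofReal t < c} = Set.Iio c.toReal := by
        ext t
        rcases le_or_gt 0 t with ht | ht
        · simp [Set.mem_Iio, ENNReal.ofReal_lt_iff_lt_toReal ht hne]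
        · simp [Set.mem_Iio, ENNReal.ofReal_of_nonpos ht.le, pos_iff_ne_zero.mpr h0]
          calc t < 0 := ht
            _ ≤ c.toReal := ENNReal.toReal_nonneg
      rw [this]; exact measurableSet_Iio
  rw [lintegral_indicator hmeas, setLIntegral_const]
  have : Set.Ioo (0:ℝ) 1 ∩ {t : ℝ | ENNReal.ofReal t < c} = Set.Ioo 0 c.toReal := by
    ext t
    constructor
    · rintro ⟨⟨ht0, ht1⟩, htc⟩
      exact ⟨ht0, (ENNReal.ofReal_lt_iff_lt_toReal ht0.le hne).mp htc⟩
    · rintro ⟨ht0, htc⟩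
      have h1 : t < 1 := lt_of_lt_of_le htc (by
        simpa using ENNReal.toReal_mono (by norm_num) hc)
      exact ⟨⟨ht0, h1⟩, (ENNReal.ofReal_lt_iff_lt_toReal ht0.le hne).mpr htc⟩
  rw [Measure.restrict_apply hmeas, Set.inter_comm, this, Real.volume_Ioo]
  simp [ENNReal.ofReal_toReal hne]

open MeasureTheory in
private lemma dp_layer_sum {Ω : Type*} [Countable Ω] (p : PMF Ω) (h : Ω → ℝ≥0∞) (hh : ∀ a, h a ≤ 1) :
    ∑' a, p a * h a
      = ∫⁻ t in Set.Ioo (0:ℝ) 1, ∑' a : ({a | ENNReal.ofReal t < h a} : Set Ω), p a := by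
  have hswap : ∀ t : ℝ, (∑' a : ({a | ENNReal.ofReal t < h a} : Set Ω), p a)
      = ∑' a, Set.indicator {t : ℝ | ENNReal.ofReal t < h a} (fun _ => p a) t := by
    intro t
    rw [tsum_subtype]
    exact tsum_congr fun a => by
      by_cases hmem : ENNReal.ofReal t < h a <;> simp [Set.indicator, hmem]
  calc ∑' a, p a * h a
      = ∑' a, ∫⁻ t in Set.Ioo (0:ℝ) 1,
          Set.indicator {t : ℝ | ENNReal.ofReal t < h a} (fun _ => p a) t := by
        congr 1; ext a
        have : (fun t : ℝ => Set.indicator {t : ℝ | ENNReal.ofReal t < h a} (fun _ => p a) t)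
            = fun t : ℝ => p a * Set.indicator {t : ℝ | ENNReal.ofReal t < h a} (fun _ => (1:ℝ≥0∞)) t := by
          ext t; by_cases hm : ENNReal.ofReal t < h a <;> simp [Set.indicator, hm]
        rw [this, lintegral_const_mul' _ _ (PMF.apply_ne_top p a), dp_layer_pt (h a) (hh a)]
    _ = ∫⁻ t in Set.Ioo (0:ℝ) 1, ∑' a, Set.indicator {t : ℝ | ENNReal.ofReal t < h a} (fun _ => p a) t := by
        rw [lintegral_tsum]
        intro a
        apply Measurable.aemeasurable
        apply Measurable.indicator measurable_const
        rcases eq_or_ne (h a) 0 with h0 | h0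
        · convert MeasurableSet.empty; ext t; simp [h0]
        · have hne : h a ≠ ⊤ := (lt_of_le_of_lt (hh a) (by norm_num)).ne
          have : {t : ℝ | ENNReal.ofReal t < h a} = Set.Iio (h a).toReal := by
            ext t
            rcases le_or_gt 0 t with ht | ht
            · simp [Set.mem_Iio, ENNReal.ofReal_lt_iff_lt_toReal ht hne]
            · simp [Set.mem_Iio, ENNReal.ofReal_of_nonpos ht.le, pos_iff_ne_zero.mpr h0]
              calc t < 0 := ht
                _ ≤ (h a).toReal := ENNReal.toReal_nonneg
          rw [this]; exact measurableSet_Iio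
    _ = ∫⁻ t in Set.Ioo (0:ℝ) 1, ∑' a : ({a | ENNReal.ofReal t < h a} : Set Ω), p a := by
        apply lintegral_congr; intro t; rw [hswap t]

open MeasureTheory in
private lemma dp_key {Ω : Type*} [Countable Ω] (μ ν : PMF Ω) (h : Ω → ℝ≥0∞) (hh : ∀ a, h a ≤ 1)
    (ε δ : ℝ)
    (hdp : ∀ S : Set Ω, ∑' a : S, μ a ≤ ENNReal.ofReal (Real.exp ε) * ∑' a : S, ν a + ENNReal.ofReal δ) :
    ∑' a, μ a * h a ≤ ENNReal.ofReal (Real.exp ε) * ∑' a, ν a * h a + ENNReal.ofReal δ := by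
  rw [dp_layer_sum μ h hh, dp_layer_sum ν h hh]
  have hmeasf : Measurable (fun t : ℝ => ∑' a : ({a | ENNReal.ofReal t < h a} : Set Ω), ν a) := by
    have : ∀ t : ℝ, (∑' a : ({a | ENNReal.ofReal t < h a} : Set Ω), ν a)
        = ∑' a, Set.indicator {t : ℝ | ENNReal.ofReal t < h a} (fun _ => ν a) t := by
      intro t; rw [tsum_subtype]
      exact tsum_congr fun a => by
        by_cases hmem : ENNReal.ofReal t < h a <;> simp [Set.indicator, hmem]
    simp only [this]
    apply Measurable.ennreal_tsum
    intro a
    apply Measurable.indicator measurable_const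
    rcases eq_or_ne (h a) 0 with h0 | h0
    · convert MeasurableSet.empty; ext t; simp [h0]
    · have hne : h a ≠ ⊤ := (lt_of_le_of_lt (hh a) (by norm_num)).ne
      have : {t : ℝ | ENNReal.ofReal t < h a} = Set.Iio (h a).toReal := by
        ext t
        rcases le_or_gt 0 t with ht | ht
        · simp [Set.mem_Iio, ENNReal.ofReal_lt_iff_lt_toReal ht hne]
        · simp [Set.mem_Iio, ENNReal.ofReal_of_nonpos ht.le, pos_iff_ne_zero.mpr h0]
          calc t < 0 := ht
            _ ≤ (h a).toReal := ENNReal.toReal_nonneg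
      rw [this]; exact measurableSet_Iio
  calc ∫⁻ t in Set.Ioo (0:ℝ) 1, ∑' a : ({a | ENNReal.ofReal t < h a} : Set Ω), μ a
      ≤ ∫⁻ t in Set.Ioo (0:ℝ) 1,
          (ENNReal.ofReal (Real.exp ε) * ∑' a : ({a | ENNReal.ofReal t < h a} : Set Ω), ν a
            + ENNReal.ofReal δ) := by
        apply lintegral_mono; intro t; exact hdp _
    _ = ENNReal.ofReal (Real.exp ε) * (∫⁻ t in Set.Ioo (0:ℝ) 1,
          (∑' a : ({a | ENNReal.ofReal t < h a} : Set Ω), ν a)) + ENNReal.ofReal δ := by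
        rw [lintegral_add_right _ measurable_const, setLIntegral_const,
          lintegral_const_mul _ hmeasf]
        simp [Real.volume_Ioo]

private lemma dp_pair_tsum {Ω1 Ω2 : Type*} (p : PMF Ω1) (q : PMF Ω2) (S : Set (Ω1 × Ω2)) :
    ∑' ω : S, (p.bind fun a => q.map (fun b => (a, b))) ω
      = ∑' a, p a * ∑' b : ({b | (a, b) ∈ S} : Set Ω2), q b := by
  classical
  have hval : ∀ ω : Ω1 × Ω2, (p.bind fun a => q.map (fun b => (a, b))) ω = p ω.1 * q ω.2 := by
    rintro ⟨x, y⟩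
    rw [PMF.bind_apply]
    have hmap : ∀ a, (q.map fun b => (a, b)) (x, y) = if x = a then q y else 0 := by
      intro a
      rw [PMF.map_apply]
      rcases eq_or_ne x a with rfl | hxa
      · rw [if_pos rfl]
        rw [tsum_eq_single y]
        · simp
        · intro b hb; simp [hb.symm, Prod.ext_iff]
      · rw [if_neg hxa]
        apply ENNReal.summable.tsum_eq_zero_iff |>.mpr
        intro b
        simp [Prod.ext_iff, hxa]
    simp only [hmap]
    rw [tsum_eq_single x]
    · simp
    · intro a ha; simp [ha.symm]
  rw [tsum_subtype]
  have : ∀ ω : Ω1 × Ω2, S.indicator (fun ω => (p.bind fun a => q.map (fun b => (a, b))) ω) ω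
      = S.indicator (fun ω => p ω.1 * q ω.2) ω := by
    intro ω; by_cases hm : ω ∈ S <;> simp [Set.indicator, hm, hval]
  rw [tsum_congr this, ENNReal.tsum_prod']
  refine tsum_congr fun a => ?_
  rw [tsum_subtype, ← ENNReal.tsum_mul_left]
  refine tsum_congr fun b => ?_
  by_cases hmem : (a, b) ∈ S <;> simp [Set.indicator, hmem]

/-- A mechanism `M : X → PMF Ω` satisfies `(ε, δ)`-differential privacy w.r.t. an
adjacency relation `adj` if for all adjacent `D, D'` and every subset `S` of `Ω`,
`Σ_{ω ∈ S} M D ω ≤ exp(ε)·Σ_{ω ∈ S} M D' ω + δ`. -/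
def IsDP {X : Type*} {Ω : Type*} (adj : X → X → Prop) (M : X → PMF Ω)
    (ε δ : ℝ) : Prop :=
  ∀ D D', adj D D' → ∀ S : Set Ω,
    ∑' ω : S, M D ω ≤
      ENNReal.ofReal (Real.exp ε) * ∑' ω : S, M D' ω + ENNReal.ofReal δ

/-- Sequential composition: if `M1` is `(ε1, δ1)`-DP and `M2` is `(ε2, δ2)`-DP, then the
independent pair mechanism `D ↦ (M1 D).bind (fun a => (M2 D).map (fun b => (a, b)))`
is `(ε1 + ε2, δ1 + δ2)`-DP. -/
theorem sequential_composition
    {X : Type*} {Ω1 Ω2 : Type*} [Countable Ω1] [Countable Ω2]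
    (adj : X → X → Prop)
    (M1 : X → PMF Ω1) (M2 : X → PMF Ω2)
    (ε1 ε2 δ1 δ2 : ℝ)
    (hε1 : 0 ≤ ε1) (hε2 : 0 ≤ ε2) (hδ1 : 0 ≤ δ1) (hδ2 : 0 ≤ δ2)
    (h1 : IsDP adj M1 ε1 δ1) (h2 : IsDP adj M2 ε2 δ2) :
    IsDP adj (fun D => (M1 D).bind (fun a => (M2 D).map (fun b => (a, b))))
      (ε1 + ε2) (δ1 + δ2) := by
  intro D D' hadj S
  set g : X → Ω1 → ℝ≥0∞ := fun E a => ∑' b : ({b | (a, b) ∈ S} : Set Ω2), M2 E b with hg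
  set h : Ω1 → ℝ≥0∞ := fun a => min (g D a) (ENNReal.ofReal (Real.exp ε2) * g D' a) with hhdef
  have hgle1 : ∀ E a, g E a ≤ 1 := by
    intro E a
    rw [hg]
    simp only
    rw [tsum_subtype]
    calc ∑' b, ({b | (a, b) ∈ S} : Set Ω2).indicator (fun b => M2 E b) b
        ≤ ∑' b, M2 E b := ENNReal.tsum_le_tsum fun b => Set.indicator_le_self _ _ b
      _ = 1 := (M2 E).tsum_coe
  have hh1 : ∀ a, h a ≤ 1 := fun a => le_trans (min_le_left _ _) (hgle1 D a)
  have hgh : ∀ a, g D a ≤ h a + ENNReal.ofReal δ2 := by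
    intro a
    rw [hhdef]
    simp only
    rcases le_total (g D a) (ENNReal.ofReal (Real.exp ε2) * g D' a) with hab | hab
    · rw [min_eq_left hab]; exact le_self_add
    · rw [min_eq_right hab]; exact h2 D D' hadj {b | (a, b) ∈ S}
  show ∑' ω : S, ((M1 D).bind fun a => (M2 D).map (fun b => (a, b))) ω ≤ _
  rw [dp_pair_tsum]
  have hRHS : (∑' ω : S, ((M1 D').bind fun a => (M2 D').map (fun b => (a, b))) ω)
      = ∑' a, M1 D' a * g D' a := dp_pair_tsum (M1 D') (M2 D') S
  calc ∑' a, M1 D a * g D a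
      ≤ ∑' a, M1 D a * (h a + ENNReal.ofReal δ2) :=
        ENNReal.tsum_le_tsum fun a => mul_le_mul_right (hgh a) _
    _ = (∑' a, M1 D a * h a) + ENNReal.ofReal δ2 := by
        simp only [mul_add]
        rw [ENNReal.tsum_add, ENNReal.tsum_mul_right, (M1 D).tsum_coe, one_mul]
    _ ≤ (ENNReal.ofReal (Real.exp ε1) * ∑' a, M1 D' a * h a + ENNReal.ofReal δ1)
          + ENNReal.ofReal δ2 := by
        gcongr
        exact dp_key (M1 D) (M1 D') h hh1 ε1 δ1 (fun S' => h1 D D' hadj S')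
    _ ≤ (ENNReal.ofReal (Real.exp ε1) *
          (ENNReal.ofReal (Real.exp ε2) * ∑' a, M1 D' a * g D' a) + ENNReal.ofReal δ1)
          + ENNReal.ofReal δ2 := by
        gcongr
        calc ∑' a, M1 D' a * h a
            ≤ ∑' a, M1 D' a * (ENNReal.ofReal (Real.exp ε2) * g D' a) :=
              ENNReal.tsum_le_tsum fun a => mul_le_mul_right (min_le_right _ _) _
          _ = ENNReal.ofReal (Real.exp ε2) * ∑' a, M1 D' a * g D' a := by
              rw [← ENNReal.tsum_mul_left]
              exact tsum_congr fun a => by ring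
    _ = ENNReal.ofReal (Real.exp (ε1 + ε2)) *
          (∑' ω : S, ((M1 D').bind fun a => (M2 D').map (fun b => (a, b))) ω)
          + ENNReal.ofReal (δ1 + δ2) := by
        rw [hRHS, Real.exp_add, ENNReal.ofReal_mul (Real.exp_nonneg ε1),
          ENNReal.ofReal_add hδ1 hδ2]
        ring
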